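/- Let a ≥ 2 and let h, d be positive integers with gcd(a, d) = 1 and ha − d > 1, let A = (a, ha−d, ha+d), and set s = ⌊(ha−d)/(2h)⌋. Then the Sylvester number satisfies n(A) = ((ha+d)/(2a))·s(s+1) + ((ha−d)/(2a))·(a−s)(a−s−1) − (a−1)/2. -/

import Mathlib

/-- `m` is representable by the sequence `A`. -/
def IsRepresentable {n : ℕ} (A : Fin n → ℕ) (m : ℕ) : Prop :=
  ∃ x : Fin n → ℕ, m = ∑ i, A i * x i


lemma repr3 (a b c m : ℕ) :
    IsRepresentable ![a, b, c] m ↔ ∃ x u v : ℕ, m = a * x + b * u + c * v := by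
  constructor
  · rintro ⟨x, hx⟩
    exact ⟨x 0, x 1, x 2, by simpa [Fin.sum_univ_three] using hx⟩
  · rintro ⟨x, u, v, h⟩
    exact ⟨![x, u, v], by simpa [Fin.sum_univ_three] using h⟩

/-- Characterization of representability. -/
lemma repr_char (a h d k m : ℕ) (ha : 2 ≤ a) (had : Nat.gcd a d = 1)
    (hda : d < h * a) (hk : k < a)
    (hm : (m : ZMod a) = (k : ZMod a) * d) :
    IsRepresentable ![a, h * a - d, h * a + d] m ↔
      (h * a + d) * k ≤ m ∨ (h * a - d) * (a - k) ≤ m := by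
  have ha0 : 0 < a := by omega
  have hdu : IsUnit (d : ZMod a) := (ZMod.isUnit_iff_coprime d a).2 (Nat.coprime_comm.1 had)
  have hb : ((h * a - d : ℕ) : ZMod a) = - (d : ZMod a) := by
    have : ((h * a - d : ℕ) : ℤ) = h * a - d := by push_cast [Nat.cast_sub hda.le]; ring
    have h2 : (((h * a - d : ℕ) : ℤ) : ZMod a) = ((h:ℤ) * a - d : ℤ) := by rw [this]
    push_cast at h2 ⊢
    rw [h2]; simp [ZMod.natCast_self]
  have hc : ((h * a + d : ℕ) : ZMod a) = (d : ZMod a) := by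
    push_cast; simp [ZMod.natCast_self]
  rw [repr3]
  constructor
  · rintro ⟨x, u, v, rfl⟩
    -- congruence: d*(v - u - k) ≡ 0 mod a
    have hcong : ((v : ZMod a) - u - k) * d = 0 := by
      have := hm
      push_cast at this
      rw [hb] at this
      have ha' : (a : ZMod a) = 0 := ZMod.natCast_self a
      linear_combination this - (x : ZMod a) * ha' - (h:ZMod a) * (v:ZMod a) * ha'
    have hdvd : (a : ℤ) ∣ (v : ℤ) - u - k := by
      have h0 : ((v : ZMod a) - u - k) = 0 := by
        exact (IsUnit.mul_left_eq_zero hdu).1 hcong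
      have : ((((v : ℤ) - u - k) : ℤ) : ZMod a) = 0 := by push_cast; push_cast at h0; linear_combination h0
      exact (ZMod.intCast_zmod_eq_zero_iff_dvd _ _).1 this
    obtain ⟨t, ht⟩ := hdvd
    rcases le_or_gt 0 t with htpos | htneg
    · left
      have hvk : (k : ℤ) ≤ v := by nlinarith
      have hvk' : k ≤ v := by exact_mod_cast hvk
      calc (h * a + d) * k ≤ (h * a + d) * v := Nat.mul_le_mul_left _ hvk'
        _ ≤ a * x + (h*a - d) * u + (h * a + d) * v := by omega
    · right
      have htle : t ≤ -1 := by omega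
      have huv : (a : ℤ) - k ≤ u := by nlinarith
      have huv' : a - k ≤ u := by omega
      calc (h * a - d) * (a - k) ≤ (h * a - d) * u := Nat.mul_le_mul_left _ huv'
        _ ≤ a * x + (h*a - d) * u + (h * a + d) * v := by omega
  · rintro (hle | hle)
    · -- m = (h*a+d)*k + a * x
      have hdvd : a ∣ m - (h * a + d) * k := by
        have : ((m - (h * a + d) * k : ℕ) : ZMod a) = 0 := by
          rw [Nat.cast_sub hle]
          push_cast
          rw [hm]
          have ha' : (a : ZMod a) = 0 := ZMod.natCast_self a
          linear_combination - (k:ZMod a) * (h:ZMod a) * ha'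
        exact (ZMod.natCast_eq_zero_iff _ _).1 this
      obtain ⟨x, hx⟩ := hdvd
      exact ⟨x, 0, k, by omega⟩
    · have hdvd : a ∣ m - (h * a - d) * (a - k) := by
        have : ((m - (h * a - d) * (a - k) : ℕ) : ZMod a) = 0 := by
          rw [Nat.cast_sub hle]
          push_cast [Nat.cast_sub hk.le]
          rw [hm, hb]
          ring_nf
          simp [ZMod.natCast_self]
        exact (ZMod.natCast_eq_zero_iff _ _).1 this
      obtain ⟨x, hx⟩ := hdvd
      exact ⟨x, a - k, 0, by omega⟩

lemma gap_count (a : ℕ) (ha : 0 < a) (K mv : ℕ → ℕ)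
    (hK1 : ∀ m, K m < a)
    (hK2 : ∀ k, k < a → ∀ j, K (mv k % a + a * j) = k)
    (hK3 : ∀ m, m % a = mv (K m) % a) :
    {m : ℕ | m < mv (K m)}.ncard = ∑ k ∈ Finset.range a, mv k / a := by
  classical
  set G : Finset ℕ := (Finset.range a).biUnion
    (fun k => (Finset.range (mv k / a)).image (fun j => mv k % a + a * j)) with hG
  have hmemG : ∀ m, m ∈ G ↔ m < mv (K m) := by
    intro m
    simp only [hG, Finset.mem_biUnion, Finset.mem_image, Finset.mem_range]
    constructor
    · rintro ⟨k, hk, j, hj, rfl⟩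
      rw [hK2 k hk j]
      have h1 := Nat.div_add_mod (mv k) a
      have h2 : a * j < a * (mv k / a) := (Nat.mul_lt_mul_left ha).2 hj
      omega
    · intro hm
      refine ⟨K m, hK1 m, m / a, ?_, ?_⟩
      · have h1 := hK3 m
        have h2 := Nat.div_add_mod m a
        have h3 := Nat.div_add_mod (mv (K m)) a
        have : m / a < mv (K m) / a := by
          by_contra hcon
          push_neg at hcon
          have : mv (K m) ≤ m := by nlinarith [Nat.mul_le_mul_left a hcon]
          omega
        exact this
      · have h1 := hK3 m
        have h2 := Nat.div_add_mod m a
        omega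
  have hset : {m : ℕ | m < mv (K m)} = ↑G := by
    ext m; simp [hmemG m]
  rw [hset, Set.ncard_coe_finset]
  rw [Finset.card_biUnion]
  · refine Finset.sum_congr rfl (fun k hk => ?_)
    rw [Finset.card_image_of_injective _ (fun j1 j2 hj => by
      have : a * j1 = a * j2 := by omega
      exact Nat.eq_of_mul_eq_mul_left ha this)]
    simp
  · intro x hx y hy hxy
    simp only [Finset.mem_coe, Finset.mem_range] at hx hy
    simp only [Function.onFun, Finset.disjoint_left, Finset.mem_image, Finset.mem_range]
    rintro m ⟨j, hj, rfl⟩ ⟨j', hj', he⟩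
    have h1 := hK2 x hx j
    have h2 := hK2 y hy j'
    rw [he] at h2
    omega

theorem stmt_16 (a h d : ℕ) (ha : 2 ≤ a) (hh : 0 < h) (hd : 0 < d)
    (had : Nat.gcd a d = 1) (hda : d < h * a) (hhad : 1 < h * a - d)
    (s : ℕ) (hs : s = (h * a - d) / (2 * h)) :
    (({m : ℕ | ¬ IsRepresentable ![a, h * a - d, h * a + d] m}.ncard : ℚ)) =
      (((h : ℚ) * a + d) / (2 * a)) * s * ((s : ℚ) + 1)
        + (((h : ℚ) * a - d) / (2 * a)) * ((a : ℚ) - s) * ((a : ℚ) - s - 1)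
        - ((a : ℚ) - 1) / 2 := by
  have ha0 : 0 < a := by omega
  haveI : NeZero a := ⟨by omega⟩
  have hcop : Nat.Coprime d a := Nat.coprime_comm.mp had
  set u : (ZMod a)ˣ := ZMod.unitOfCoprime d hcop with hu_def
  have hu : (u : ZMod a) = d := ZMod.coe_unitOfCoprime d hcop
  set K : ℕ → ℕ := fun m => ((m : ZMod a) * (↑u⁻¹ : ZMod a)).val with hK_def
  have hK1 : ∀ m, K m < a := fun m => ZMod.val_lt _
  have hK2' : ∀ m, ((K m : ℕ) : ZMod a) * d = m := by
    intro m
    have h1 : ((K m : ℕ) : ZMod a) = (m : ZMod a) * (↑u⁻¹ : ZMod a) := by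
      simp [hK_def, ZMod.natCast_val, ZMod.cast_id]
    rw [h1, ← hu, mul_assoc, Units.inv_mul, mul_one]
  have hKuniq : ∀ (m k : ℕ), k < a → (m : ZMod a) = (k : ZMod a) * d → K m = k := by
    intro m k hk hmk
    have h1 : ((K m : ℕ) : ZMod a) * d = (k : ZMod a) * d := by rw [hK2', hmk]
    have h2 : ((K m : ℕ) : ZMod a) = (k : ZMod a) := by
      have := congrArg (· * (↑u⁻¹ : ZMod a)) h1
      simpa [← hu, mul_assoc, Units.mul_inv] using this
    have h3 : K m ≡ k [MOD a] := (ZMod.natCast_eq_natCast_iff _ _ _).1 h2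
    have h4 : K m % a = k % a := h3
    have := hK1 m
    rw [Nat.mod_eq_of_lt this, Nat.mod_eq_of_lt hk] at h4
    exact h4
  set mv : ℕ → ℕ := fun k => min ((h * a + d) * k) ((h * a - d) * (a - k)) with hmv_def
  have ha' : (a : ZMod a) = 0 := ZMod.natCast_self a
  have hmvcast : ∀ k, k < a → ((mv k : ℕ) : ZMod a) = (k : ZMod a) * d := by
    intro k hk
    rcases min_choice ((h * a + d) * k) ((h * a - d) * (a - k)) with h' | h' <;>
      rw [hmv_def] <;> simp only [] <;> rw [h']
    · push_cast
      linear_combination ((h : ZMod a) * k) * ha'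
    · push_cast [Nat.cast_sub hda.le, Nat.cast_sub hk.le]
      linear_combination ((h : ZMod a) * a - (h : ZMod a) * k - d) * ha'
  -- the three hypotheses of gap_count
  have hK2 : ∀ k, k < a → ∀ j, K (mv k % a + a * j) = k := by
    intro k hk j
    apply hKuniq
    · exact hk
    · push_cast [ZMod.natCast_mod]
      rw [hmvcast k hk]
      linear_combination (j : ZMod a) * ha'
  have hK3 : ∀ m, m % a = mv (K m) % a := by
    intro m
    have h1 : (m : ZMod a) = ((mv (K m) : ℕ) : ZMod a) := by
      rw [hmvcast (K m) (hK1 m), ← hK2' m]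
    exact (ZMod.natCast_eq_natCast_iff _ _ _).1 h1
  have hsetEq : {m : ℕ | ¬ IsRepresentable ![a, h * a - d, h * a + d] m}
      = {m : ℕ | m < mv (K m)} := by
    ext m
    have hm : (m : ZMod a) = ((K m : ℕ) : ZMod a) * d := (hK2' m).symm
    rw [Set.mem_setOf_eq, Set.mem_setOf_eq,
      repr_char a h d (K m) m ha had hda (hK1 m) hm]
    simp only [hmv_def]
    omega
  have hN : {m : ℕ | ¬ IsRepresentable ![a, h * a - d, h * a + d] m}.ncard
      = ∑ k ∈ Finset.range a, mv k / a := by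
    rw [hsetEq]
    exact gap_count a ha0 K mv hK1 hK2 hK3
  set N := ∑ k ∈ Finset.range a, mv k / a with hN_def
  have hsum1 : ∑ k ∈ Finset.range a, mv k
      = a * N + ∑ k ∈ Finset.range a, (mv k % a) := by
    rw [hN_def, Finset.mul_sum, ← Finset.sum_add_distrib]
    exact Finset.sum_congr rfl fun k _ => (Nat.div_add_mod (mv k) a).symm
  have hsum2 : ∑ k ∈ Finset.range a, (mv k % a) = ∑ k ∈ Finset.range a, k := by
    refine Finset.sum_nbij' (fun k => mv k % a) K ?_ ?_ ?_ ?_ ?_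
    · intro k _
      simp [Nat.mod_lt _ ha0]
    · intro m _
      simp [hK1 m]
    · intro k hk
      simp only [Finset.mem_range] at hk
      apply hKuniq _ _ hk
      rw [ZMod.natCast_mod, hmvcast k hk]
    · intro m hm
      simp only [Finset.mem_range] at hm
      show mv (K m) % a = m
      rw [← hK3 m, Nat.mod_eq_of_lt hm]
    · intro k _
      rfl
  -- bounds on s
  have hB : (h * a - d) + d = h * a := by omega
  have h2hs : 2 * h * s ≤ h * a - d := by
    rw [hs]
    calc 2 * h * ((h * a - d) / (2 * h)) = ((h * a - d) / (2 * h)) * (2 * h) := by ring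
      _ ≤ h * a - d := Nat.div_mul_le_self _ _
  have h2hs' : h * a - d < 2 * h * (s + 1) := by
    have h1 := Nat.div_add_mod (h * a - d) (2 * h)
    have h2 : (h * a - d) % (2 * h) < 2 * h := Nat.mod_lt _ (by omega)
    have h3 : 2 * h * (s + 1) = 2 * h * ((h * a - d) / (2 * h)) + 2 * h := by rw [hs]; ring
    omega
  have hsa : s < a := by
    have h1 : 2 * h * s < 2 * h * a := by
      have e : 2 * h * a = h * a + h * a := by ring
      omega
    exact Nat.lt_of_mul_lt_mul_left h1
  have hmin1 : ∀ k, k ≤ s → mv k = (h * a + d) * k := by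
    intro k hk
    apply min_eq_left
    obtain ⟨i, hi⟩ : ∃ i, a = k + i := ⟨a - k, by omega⟩
    rw [show a - k = i by omega]
    have h2hk : 2 * h * k ≤ h * a - d :=
      le_trans (Nat.mul_le_mul_left (2 * h) hk) h2hs
    have e1 : 2 * h * k * k ≤ (h * a - d) * k := Nat.mul_le_mul_right k h2hk
    have e2 : 2 * h * k * i ≤ (h * a - d) * i := Nat.mul_le_mul_right i h2hk
    have i1 : 2 * h * k * k + 2 * h * k * i = 2 * k * (h * a) := by rw [hi]; ring
    have i2 : 2 * k * (h * a - d) + 2 * k * d = 2 * k * (h * a) := by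
      calc 2 * k * (h * a - d) + 2 * k * d = 2 * k * ((h * a - d) + d) := by ring
        _ = 2 * k * (h * a) := by rw [hB]
    have i3 : (h * a + d) * k = (h * a - d) * k + 2 * d * k := by
      calc (h * a + d) * k = ((h * a - d) + d + d) * k := by rw [hB]
        _ = (h * a - d) * k + 2 * d * k := by ring
    linarith [e1, e2, i1, i2, i3]
  have hmin2 : ∀ k, s < k → k < a → mv k = (h * a - d) * (a - k) := by
    intro k hk hka
    apply min_eq_right
    obtain ⟨i, hi⟩ : ∃ i, a = k + i := ⟨a - k, by omega⟩
    rw [show a - k = i by omega]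
    have h2hk : h * a - d + 1 ≤ 2 * h * k := by
      have : 2 * h * (s + 1) ≤ 2 * h * k := Nat.mul_le_mul_left _ (by omega)
      omega
    have e1 : (h * a - d + 1) * k ≤ 2 * h * k * k := Nat.mul_le_mul_right k h2hk
    have e2 : (h * a - d + 1) * i ≤ 2 * h * k * i := Nat.mul_le_mul_right i h2hk
    have i1 : 2 * h * k * k + 2 * h * k * i = 2 * k * (h * a) := by rw [hi]; ring
    have i2 : 2 * k * (h * a - d) + 2 * k * d = 2 * k * (h * a) := by
      calc 2 * k * (h * a - d) + 2 * k * d = 2 * k * ((h * a - d) + d) := by ring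
        _ = 2 * k * (h * a) := by rw [hB]
    have i3 : (h * a + d) * k = (h * a - d) * k + 2 * d * k := by
      calc (h * a + d) * k = ((h * a - d) + d + d) * k := by rw [hB]
        _ = (h * a - d) * k + 2 * d * k := by ring
    linarith [e1, e2, i1, i2, i3]
  set T1 := ∑ k ∈ Finset.range (s + 1), k with hT1
  set T2 := ∑ k ∈ Finset.range (a - s), k with hT2
  set T := ∑ k ∈ Finset.range a, k with hT
  have hsplit : ∑ k ∈ Finset.range a, mv k = (h * a + d) * T1 + (h * a - d) * T2 := by
    rw [← Finset.sum_range_add_sum_Ico mv (by omega : s + 1 ≤ a)]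
    congr 1
    · rw [hT1, Finset.mul_sum]
      refine Finset.sum_congr rfl fun k hk => ?_
      simp only [Finset.mem_range] at hk
      exact hmin1 k (by omega)
    · rw [Finset.sum_Ico_eq_sum_range]
      calc ∑ i ∈ Finset.range (a - (s + 1)), mv (s + 1 + i)
          = ∑ i ∈ Finset.range (a - (s + 1)),
              (h * a - d) * ((a - (s + 1)) - 1 - i + 1) := by
            refine Finset.sum_congr rfl fun i hi => ?_
            simp only [Finset.mem_range] at hi
            rw [hmin2 (s + 1 + i) (by omega) (by omega)]
            congr 1
            omega
        _ = ∑ i ∈ Finset.range (a - (s + 1)), (h * a - d) * (i + 1) :=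
            Finset.sum_range_reflect (fun j => (h * a - d) * (j + 1)) (a - (s + 1))
        _ = ∑ i ∈ Finset.range (a - (s + 1) + 1), (h * a - d) * i := by
            rw [Finset.sum_range_succ' (fun i => (h * a - d) * i) (a - (s + 1))]
            simp
        _ = (h * a - d) * T2 := by
            rw [show a - (s + 1) + 1 = a - s by omega, hT2, Finset.mul_sum]
  have key : a * N + T = (h * a + d) * T1 + (h * a - d) * T2 := by
    rw [← hsplit, hsum1, hsum2]
  have G1 : T1 * 2 = (s + 1) * s := by
    have := Finset.sum_range_id_mul_two (s + 1)
    simpa using this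
  have G2 : T2 * 2 = (a - s) * (a - s - 1) := Finset.sum_range_id_mul_two (a - s)
  have G3 : T * 2 = a * (a - 1) := Finset.sum_range_id_mul_two a
  have keyQ : (a : ℚ) * N + T = ((h : ℚ) * a + d) * T1 + ((h : ℚ) * a - d) * T2 := by
    have hc := congrArg (fun x : ℕ => (x : ℚ)) key
    push_cast [Nat.cast_sub hda.le] at hc
    linear_combination hc
  have G1Q : (T1 : ℚ) * 2 = ((s : ℚ) + 1) * s := by exact_mod_cast congrArg (fun x : ℕ => (x : ℚ)) G1
  have G2Q : (T2 : ℚ) * 2 = ((a : ℚ) - s) * ((a : ℚ) - s - 1) := by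
    have hc := congrArg (fun x : ℕ => (x : ℚ)) G2
    push_cast [Nat.cast_sub hsa.le, Nat.cast_sub (show 1 ≤ a - s by omega)] at hc
    linear_combination hc
  have G3Q : (T : ℚ) * 2 = (a : ℚ) * ((a : ℚ) - 1) := by
    have hc := congrArg (fun x : ℕ => (x : ℚ)) G3
    push_cast [Nat.cast_sub (show 1 ≤ a by omega)] at hc
    linear_combination hc
  have final : (N : ℚ) * (2 * a) = ((h : ℚ) * a + d) * s * ((s : ℚ) + 1)
      + ((h : ℚ) * a - d) * ((a : ℚ) - s) * ((a : ℚ) - s - 1)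
      - (a : ℚ) * ((a : ℚ) - 1) := by
    linear_combination 2 * keyQ + ((h : ℚ) * a + d) * G1Q + ((h : ℚ) * a - d) * G2Q - G3Q
  have haQ : (a : ℚ) ≠ 0 := by
    have : (0 : ℚ) < a := by exact_mod_cast ha0
    positivity
  have h2aQ : (2 * (a : ℚ)) ≠ 0 := by
    have : (0 : ℚ) < a := by exact_mod_cast ha0
    positivity
  have expand : ((h : ℚ) * a + d) / (2 * a) * s * ((s : ℚ) + 1)
      + ((h : ℚ) * a - d) / (2 * a) * ((a : ℚ) - s) * ((a : ℚ) - s - 1)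
      - ((a : ℚ) - 1) / 2
      = (((h : ℚ) * a + d) * s * ((s : ℚ) + 1)
        + ((h : ℚ) * a - d) * ((a : ℚ) - s) * ((a : ℚ) - s - 1)
        - (a : ℚ) * ((a : ℚ) - 1)) / (2 * a) := by
    field_simp
  rw [hN, expand, eq_div_iff h2aQ]
  linear_combination final
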